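/- Let k be a real number with k > 1, and let a, b be nonzero complex numbers with |a| = |b|. Let I be a connected component of the set {θ ∈ ℝ | Re(a·exp(i k θ)) > 0} and let J be a connected component of the set {θ ∈ ℝ | Re(b·exp(i k θ)) < 0}, and suppose I ∩ J is nonempty. Then I ∩ J is a nonempty bounded open interval, and its midpoint d = (sInf(I ∩ J) + sSup(I ∩ J))/2 satisfies that (b − a)·exp(i k d) is a negative real number; that is, d is a singular direction carrying a Stokes arrow from the exponent a z^k to the exponent b z^k. -/

import Mathlib

open Complex Set Real

/-- The set of directions `θ` in which the exponential `exp(a z^k)` grows along the ray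
`z = r e^{iθ}`, i.e. where `Re(a · exp(i k θ)) > 0`. -/
def posDirections (a : ℂ) (k : ℝ) : Set ℝ :=
  {θ : ℝ | 0 < (a * Complex.exp (Complex.I * k * θ)).re}

/-- The set of directions `θ` in which the exponential `exp(a z^k)` decays along the ray
`z = r e^{iθ}`, i.e. where `Re(a · exp(i k θ)) < 0`. -/
def negDirections (a : ℂ) (k : ℝ) : Set ℝ :=
  {θ : ℝ | (a * Complex.exp (Complex.I * k * θ)).re < 0}

lemma comp_eq_Ioo {S : Set ℝ} {x y θ₀ : ℝ} (hθ : θ₀ ∈ Set.Ioo x y)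
    (hsub : Set.Ioo x y ⊆ S) (hx : x ∉ S) (hy : y ∉ S) :
    connectedComponentIn S θ₀ = Set.Ioo x y := by
  apply subset_antisymm
  · intro z hz
    have hC : IsPreconnected (connectedComponentIn S θ₀) := isPreconnected_connectedComponentIn
    have hord := hC.ordConnected
    have hθ₀S : θ₀ ∈ S := hsub hθ
    have hθC : θ₀ ∈ connectedComponentIn S θ₀ := mem_connectedComponentIn hθ₀S
    have hCS := connectedComponentIn_subset S θ₀
    constructor
    · by_contra h
      push_neg at h
      exact hx (hCS (hord.out hz hθC ⟨h, hθ.1.le⟩))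
    · by_contra h
      push_neg at h
      exact hy (hCS (hord.out hθC hz ⟨hθ.2.le, h⟩))
  · exact isPreconnected_Ioo.subset_connectedComponentIn hθ hsub

lemma re_mul_exp (a : ℂ) (k θ : ℝ) :
    (a * Complex.exp (Complex.I * k * θ)).re = ‖a‖ * Real.cos (a.arg + k * θ) := by
  conv_lhs => rw [← Complex.norm_mul_exp_arg_mul_I a]
  rw [mul_assoc, ← Complex.exp_add]
  have h : (a.arg : ℂ) * Complex.I + Complex.I * k * θ = ((a.arg + k*θ : ℝ) : ℂ) * Complex.I := by
    push_cast; ring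
  rw [h, Complex.re_ofReal_mul, Complex.exp_ofReal_mul_I_re]

lemma near_center (x : ℝ) (hx : 0 < Real.cos x) : ∃ n : ℤ, |x - 2*π*n| < π/2 := by
  refine ⟨round (x / (2*π)), ?_⟩
  have h2π : (0:ℝ) < 2*π := by positivity
  have h1 : |x / (2*π) - round (x / (2*π))| ≤ 1/2 := abs_sub_round _
  set n : ℤ := round (x / (2*π))
  have h2 : |x - 2*π*n| ≤ π := by
    have h3 := mul_le_mul_of_nonneg_left h1 h2π.le
    have h4 : 2*π * |x / (2*π) - n| = |2*π * (x / (2*π) - n)| := by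
      rw [abs_mul, abs_of_pos h2π]
    rw [h4] at h3
    calc |x - 2*π*n| = |2*π * (x / (2*π) - n)| := by rw [mul_sub]; field_simp
    _ ≤ 2*π * (1/2) := h3
    _ = π := by ring
  by_contra h
  push_neg at h
  have hcos : Real.cos x = Real.cos (x - n * (2*π)) := (Real.cos_sub_int_mul_two_pi x n).symm
  have hcos2 : Real.cos (x - n*(2*π)) = Real.cos |x - 2*π*n| := by
    rw [Real.cos_abs]; ring_nf
  have : Real.cos |x - 2*π*n| ≤ 0 :=
    Real.cos_nonpos_of_pi_div_two_le_of_le h (by linarith [h2])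
  rw [hcos, hcos2] at hx
  linarith

lemma polar (a : ℂ) (k θ : ℝ) :
    a * Complex.exp (Complex.I * k * θ)
      = (‖a‖ : ℂ) * Complex.exp (((a.arg + k * θ : ℝ) : ℂ) * Complex.I) := by
  conv_lhs => rw [← Complex.norm_mul_exp_arg_mul_I a]
  rw [mul_assoc, ← Complex.exp_add]
  congr 1
  push_cast; ring

lemma exp_shift (x y : ℝ) (n : ℤ) (h : x = y + 2*π*n) :
    Complex.exp ((x:ℂ)*Complex.I) = Complex.exp ((y:ℂ)*Complex.I) := by
  have hxy : (x:ℂ)*Complex.I = (y:ℂ)*Complex.I + (n:ℂ)*(2*(π:ℂ)*Complex.I) := by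
    push_cast [h]; ring
  rw [hxy, Complex.exp_add, Complex.exp_int_mul_two_pi_mul_I, mul_one]

lemma exp_shift_pi (x y : ℝ) (h : x = y + π) :
    Complex.exp ((x:ℂ)*Complex.I) = -Complex.exp ((y:ℂ)*Complex.I) := by
  have hxy : (x:ℂ)*Complex.I = (y:ℂ)*Complex.I + (π:ℂ)*Complex.I := by
    push_cast [h]; ring
  rw [hxy, Complex.exp_add, Complex.exp_pi_mul_I, mul_neg_one]

lemma pos_comp (a : ℂ) (ha : a ≠ 0) (k : ℝ) (hk : 0 < k) (θ₀ : ℝ)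
    (hθ₀ : θ₀ ∈ posDirections a k) :
    ∃ c : ℝ, (∃ n : ℤ, a.arg + k * c = 2*π*n) ∧
      connectedComponentIn (posDirections a k) θ₀
        = Set.Ioo (c - π/(2*k)) (c + π/(2*k)) := by
  have hR : 0 < ‖a‖ := by
    simpa using (norm_pos_iff.mpr ha)
  have hθ₀' : 0 < ‖a‖ * Real.cos (a.arg + k * θ₀) := by
    rw [← re_mul_exp]; exact hθ₀
  have hcos : 0 < Real.cos (a.arg + k * θ₀) := by
    rcases mul_pos_iff.mp hθ₀' with ⟨_, h⟩ | ⟨h', _⟩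
    · exact h
    · linarith
  obtain ⟨n, hn⟩ := near_center _ hcos
  set c : ℝ := (2*π*n - a.arg)/k with hcdef
  have hc : a.arg + k * c = 2*π*n := by rw [hcdef, mul_comm k, div_mul_cancel₀ _ hk.ne']; ring
  have hδ : k * (π/(2*k)) = π/2 := by field_simp
  refine ⟨c, ⟨n, hc⟩, ?_⟩
  have hmem : ∀ θ ∈ Set.Ioo (c - π/(2*k)) (c + π/(2*k)), θ ∈ posDirections a k := by
    intro θ hθ
    have h1 : k*(c - π/(2*k)) < k*θ := by exact (mul_lt_mul_iff_right₀ hk).mpr hθ.1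
    have h2 : k*θ < k*(c + π/(2*k)) := by exact (mul_lt_mul_iff_right₀ hk).mpr hθ.2
    rw [mul_sub] at h1; rw [mul_add] at h2
    have hang : a.arg + k*θ = (a.arg + k*θ - 2*π*n) + n*(2*π) := by ring
    have hcospos : 0 < Real.cos (a.arg + k*θ) := by
      rw [hang, Real.cos_add_int_mul_two_pi]
      exact Real.cos_pos_of_mem_Ioo ⟨by linarith, by linarith⟩
    show 0 < (a * Complex.exp (Complex.I * k * θ)).re
    rw [re_mul_exp]
    exact mul_pos hR hcospos
  have hend1 : (c - π/(2*k)) ∉ posDirections a k := by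
    intro h
    have h' : 0 < ‖a‖ * Real.cos (a.arg + k * (c - π/(2*k))) := by
      rw [← re_mul_exp]; exact h
    have hang : a.arg + k*(c - π/(2*k)) = -(π/2) + n*(2*π) := by
      rw [mul_sub]; linarith
    rw [hang, Real.cos_add_int_mul_two_pi, Real.cos_neg, Real.cos_pi_div_two] at h'
    simp at h'
  have hend2 : (c + π/(2*k)) ∉ posDirections a k := by
    intro h
    have h' : 0 < ‖a‖ * Real.cos (a.arg + k * (c + π/(2*k))) := by
      rw [← re_mul_exp]; exact h
    have hang : a.arg + k*(c + π/(2*k)) = π/2 + n*(2*π) := by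
      rw [mul_add]; linarith
    rw [hang, Real.cos_add_int_mul_two_pi, Real.cos_pi_div_two] at h'
    simp at h'
  have hθIoo : θ₀ ∈ Set.Ioo (c - π/(2*k)) (c + π/(2*k)) := by
    rcases abs_lt.mp hn with ⟨hn1, hn2⟩
    constructor
    · have : k*(c - π/(2*k)) < k*θ₀ := by rw [mul_sub]; linarith
      exact lt_of_mul_lt_mul_left this hk.le
    · have : k*θ₀ < k*(c + π/(2*k)) := by rw [mul_add]; linarith
      exact lt_of_mul_lt_mul_left this hk.le
  exact comp_eq_Ioo hθIoo hmem hend1 hend2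

lemma neg_comp (b : ℂ) (hb : b ≠ 0) (k : ℝ) (hk : 0 < k) (θ₁ : ℝ)
    (hθ₁ : θ₁ ∈ negDirections b k) :
    ∃ c : ℝ, (∃ n : ℤ, b.arg + k * c = 2*π*n + π) ∧
      connectedComponentIn (negDirections b k) θ₁
        = Set.Ioo (c - π/(2*k)) (c + π/(2*k)) := by
  have hR : 0 < ‖b‖ := norm_pos_iff.mpr hb
  have hθ₁' : ‖b‖ * Real.cos (b.arg + k * θ₁) < 0 := by
    rw [← re_mul_exp]; exact hθ₁
  have hcos : Real.cos (b.arg + k * θ₁) < 0 := by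
    rcases mul_neg_iff.mp hθ₁' with ⟨_, h⟩ | ⟨h', _⟩
    · exact h
    · linarith
  have hcos' : 0 < Real.cos (b.arg + k * θ₁ + π) := by
    rw [Real.cos_add_pi]; linarith
  obtain ⟨n, hn⟩ := near_center _ hcos'
  set c : ℝ := (2*π*n - π - b.arg)/k with hcdef
  have hc : b.arg + k * c = 2*π*(n-1) + π := by rw [hcdef, mul_comm k, div_mul_cancel₀ _ hk.ne']; ring
  have hδ : k * (π/(2*k)) = π/2 := by field_simp
  refine ⟨c, ⟨n-1, by exact_mod_cast hc⟩, ?_⟩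
  have hkc : b.arg + k*c = 2*π*n - π := by push_cast at hc; linarith
  have hmem : ∀ θ ∈ Set.Ioo (c - π/(2*k)) (c + π/(2*k)), θ ∈ negDirections b k := by
    intro θ hθ
    have h1 : k*(c - π/(2*k)) < k*θ := (mul_lt_mul_iff_right₀ hk).mpr hθ.1
    have h2 : k*θ < k*(c + π/(2*k)) := (mul_lt_mul_iff_right₀ hk).mpr hθ.2
    rw [mul_sub] at h1; rw [mul_add] at h2
    have hang : b.arg + k*θ = (b.arg + k*θ + π - 2*π*n) - π + n*(2*π) := by ring
    have hcosneg : Real.cos (b.arg + k*θ) < 0 := by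
      rw [hang, Real.cos_add_int_mul_two_pi, Real.cos_sub_pi]
      have : 0 < Real.cos (b.arg + k*θ + π - 2*π*n) :=
        Real.cos_pos_of_mem_Ioo ⟨by linarith, by linarith⟩
      linarith
    show (b * Complex.exp (Complex.I * k * θ)).re < 0
    rw [re_mul_exp]
    exact mul_neg_of_pos_of_neg hR hcosneg
  have hend1 : (c - π/(2*k)) ∉ negDirections b k := by
    intro h
    have h' : ‖b‖ * Real.cos (b.arg + k * (c - π/(2*k))) < 0 := by
      rw [← re_mul_exp]; exact h
    have hang : b.arg + k*(c - π/(2*k)) = -(π/2) - π + n*(2*π) := by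
      rw [mul_sub]; linarith
    rw [hang, Real.cos_add_int_mul_two_pi, Real.cos_sub_pi, Real.cos_neg,
      Real.cos_pi_div_two] at h'
    simp at h'
  have hend2 : (c + π/(2*k)) ∉ negDirections b k := by
    intro h
    have h' : ‖b‖ * Real.cos (b.arg + k * (c + π/(2*k))) < 0 := by
      rw [← re_mul_exp]; exact h
    have hang : b.arg + k*(c + π/(2*k)) = π/2 - π + n*(2*π) := by
      rw [mul_add]; linarith
    rw [hang, Real.cos_add_int_mul_two_pi, Real.cos_sub_pi, Real.cos_pi_div_two] at h'
    simp at h'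
  have hθIoo : θ₁ ∈ Set.Ioo (c - π/(2*k)) (c + π/(2*k)) := by
    rcases abs_lt.mp hn with ⟨hn1, hn2⟩
    constructor
    · have : k*(c - π/(2*k)) < k*θ₁ := by rw [mul_sub]; linarith
      exact lt_of_mul_lt_mul_left this hk.le
    · have : k*θ₁ < k*(c + π/(2*k)) := by rw [mul_add]; linarith
      exact lt_of_mul_lt_mul_left this hk.le
  exact comp_eq_Ioo hθIoo hmem hend1 hend2

/-- if a positive distinguished interval `I` of the exponent `a z^k` and a negative
distinguished interval `J` of the exponent `b z^k` (with `|a| = |b|`, `k > 1`) overlap, then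
`I ∩ J` is a nonempty bounded open interval whose midpoint `d` is a singular direction carrying
a Stokes arrow from `a z^k` to `b z^k`, i.e. `(b - a)·exp(i k d)` is a negative real number. -/
theorem stokes_arrow_of_interval_overlap
    (k : ℝ) (hk : 1 < k) (a b : ℂ) (ha : a ≠ 0) (hb : b ≠ 0)
    (hab : ‖a‖ = ‖b‖)
    (I J : Set ℝ)
    (hI : ∃ θ₀ ∈ posDirections a k, I = connectedComponentIn (posDirections a k) θ₀)
    (hJ : ∃ θ₁ ∈ negDirections b k, J = connectedComponentIn (negDirections b k) θ₁)
    (hIJ : (I ∩ J).Nonempty) :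
    (∃ x y : ℝ, x < y ∧ I ∩ J = Set.Ioo x y) ∧
      (∃ r : ℝ, r < 0 ∧
        (b - a) * Complex.exp (Complex.I * k * (((sInf (I ∩ J) + sSup (I ∩ J)) / 2 : ℝ))) = r) := by
  have hk0 : (0:ℝ) < k := by linarith
  obtain ⟨θ₀, hθ₀, hIe⟩ := hI
  obtain ⟨θ₁, hθ₁, hJe⟩ := hJ
  obtain ⟨c, ⟨n, hcn⟩, hI'⟩ := pos_comp a ha k hk0 θ₀ hθ₀
  obtain ⟨c', ⟨m, hcm⟩, hJ'⟩ := neg_comp b hb k hk0 θ₁ hθ₁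
  set δ : ℝ := π/(2*k) with hδdef
  have hδ : k * δ = π/2 := by rw [hδdef]; field_simp
  have hIJ' : I ∩ J = Set.Ioo (max (c-δ) (c'-δ)) (min (c+δ) (c'+δ)) := by
    rw [hIe, hI', hJe, hJ', Set.Ioo_inter_Ioo]
  set x : ℝ := max (c-δ) (c'-δ)
  set y : ℝ := min (c+δ) (c'+δ)
  have hxy : x < y := by
    rw [hIJ'] at hIJ
    exact Set.nonempty_Ioo.mp hIJ
  refine ⟨⟨x, y, hxy, hIJ'⟩, ?_⟩
  have hsInf : sInf (I ∩ J) = x := by rw [hIJ']; exact csInf_Ioo hxy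
  have hsSup : sSup (I ∩ J) = y := by rw [hIJ']; exact csSup_Ioo hxy
  have hxysum : x + y = c + c' := by
    show max (c-δ) (c'-δ) + min (c+δ) (c'+δ) = c + c'
    rw [max_sub_sub_right, min_add_add_right]
    have := max_add_min c c'
    linarith
  set d : ℝ := (sInf (I ∩ J) + sSup (I ∩ J)) / 2 with hddef
  have hd : d = (c + c')/2 := by rw [hddef, hsInf, hsSup, hxysum]
  set t : ℝ := k * (c' - c) / 2 with htdef
  -- bound on t
  have hcc' : |c - c'| < 2*δ := by
    have h1 : max c c' - δ < min c c' + δ := by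
      have hx' : x = max c c' - δ := (max_sub_sub_right c c' δ)
      have hy' : y = min c c' + δ := (min_add_add_right c c' δ)
      rw [hx', hy'] at hxy; exact hxy
    rcases le_total c c' with h | h
    · rw [_root_.abs_of_nonpos (by linarith)]
      rw [max_eq_right h, min_eq_left h] at h1; linarith
    · rw [_root_.abs_of_nonneg (by linarith)]
      rw [max_eq_left h, min_eq_right h] at h1; linarith
  have ht : |t| < π/2 := by
    rcases abs_lt.mp hcc' with ⟨h1, h2⟩
    rw [abs_lt]
    constructor
    · have : k * (c - c') < k * (2*δ) := (mul_lt_mul_iff_right₀ hk0).mpr h2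
      rw [htdef]; nlinarith
    · have : k * (c' - c) < k * (2*δ) := (mul_lt_mul_iff_right₀ hk0).mpr (by linarith)
      rw [htdef]; nlinarith
  have hcost : 0 < Real.cos t := Real.cos_pos_of_mem_Ioo (abs_lt.mp ht)
  set R : ℝ := ‖a‖ with hRdef
  have hR : 0 < R := norm_pos_iff.mpr ha
  refine ⟨-(2 * R * Real.cos t), by nlinarith, ?_⟩
  -- the complex computation
  have e1 : a * Complex.exp (Complex.I * k * (d:ℝ)) = (R:ℂ) * Complex.exp ((t:ℂ)*Complex.I) := by
    rw [polar a k d]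
    congr 1
    exact exp_shift _ _ n (by rw [hd, htdef]; linear_combination hcn)
  have e2 : b * Complex.exp (Complex.I * k * (d:ℝ))
      = -((R:ℂ) * Complex.exp (((-t : ℝ):ℂ)*Complex.I)) := by
    rw [polar b k d, ← hab]
    rw [exp_shift (b.arg + k * d) (-t + π) m (by rw [hd, htdef]; linear_combination hcm)]
    rw [exp_shift_pi (-t + π) (-t) (by ring)]
    ring
  have esum : (b - a) * Complex.exp (Complex.I * k * (d:ℝ))
      = -((R:ℂ) * (Complex.exp ((t:ℂ)*Complex.I) + Complex.exp (((-t : ℝ):ℂ)*Complex.I))) := by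
    rw [sub_mul, e1, e2]; ring
  rw [esum]
  have hcos2 : Complex.exp ((t:ℂ)*Complex.I) + Complex.exp (((-t : ℝ):ℂ)*Complex.I)
      = 2 * Real.cos t := by
    push_cast
    rw [Complex.exp_mul_I, Complex.exp_mul_I, Complex.cos_neg, Complex.sin_neg]
    ring
  rw [hcos2]
  push_cast
  ring
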